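/- arXiv:2007.11456 — 11 statements merged into one kernel-verified Lean document; each statement's English description precedes it below -/
import Mathlib

section
/- Let n ≥ 2 and i, j, k, l ∈ ℕ. If k ≥ j, then { a·b | a ∈ P_n^{i,j}, b ∈ P_n^{k,l} } ∪ {0} = P_n^{i+k-j, l} ∪ {0}; and if k ≤ j, then { a·b | a ∈ P_n^{i,j}, b ∈ P_n^{k,l} } ∪ {0} = P_n^{i, j-k+l} ∪ {0}. -/
/-- Words in the alphabet `{1,…,n}`. -/
abbrev W (n : ℕ) := List (Fin n)

/-- The product of the polycyclic monoid `P_n`, realized on `Option (W n × W n)`,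
with `none` the zero element and `some (μ, ν)` representing `s_μ s_ν*`. -/
def pmul {n : ℕ} : Option (W n × W n) → Option (W n × W n) → Option (W n × W n)
  | some (μ, ν), some (κ, lam) =>
      if ν <+: κ then some (μ ++ κ.drop ν.length, lam)
      else if κ <+: ν then some (μ, lam ++ ν.drop κ.length)
      else none
  | _, _ => none

/-- The involution of `P_n`. -/
def pstar {n : ℕ} : Option (W n × W n) → Option (W n × W n)
  | some (μ, ν) => some (ν, μ)
  | none => none

/-- `P_n^{k,l}`, the set of elements `s_μ s_ν*` with `|μ| = k` and `|ν| = l`. -/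
def Pkl (n k l : ℕ) : Set (Option (W n × W n)) :=
  {x | ∃ μ ν : W n, x = some (μ, ν) ∧ μ.length = k ∧ ν.length = l}

/-- `M_n = ⋃_k P_n^{k,k} ∪ {0}`. -/
def Mn (n : ℕ) : Set (Option (W n × W n)) :=
  {x | x = none ∨ ∃ μ ν : W n, x = some (μ, ν) ∧ μ.length = ν.length}

/-- A wide subsemigroup of `P_n`: closed under the product and the involution, and
containing all idempotents (which are `0` and the `s_κ s_κ*`). -/
def IsWideSub (n : ℕ) (T : Set (Option (W n × W n))) : Prop :=
  (∀ a b, a ∈ T → b ∈ T → pmul a b ∈ T) ∧ (∀ a ∈ T, pstar a ∈ T) ∧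
    (none ∈ T ∧ ∀ κ : W n, some (κ, κ) ∈ T)

/-- `P_n^{i,j} · P_n^{k,l} ∪ {0} = P_n^{i+k-j,l} ∪ {0}` if `k ≥ j`, and
`P_n^{i,j} · P_n^{k,l} ∪ {0} = P_n^{i,j-k+l} ∪ {0}` if `k ≤ j`. -/
theorem pkl_mul_pkl (n : ℕ) (hn : 2 ≤ n) (i j k l : ℕ) :
    (k ≥ j → Set.image2 pmul (Pkl n i j) (Pkl n k l) ∪ {none} =
      Pkl n (i + k - j) l ∪ {none}) ∧
    (k ≤ j → Set.image2 pmul (Pkl n i j) (Pkl n k l) ∪ {none} =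
      Pkl n i (j - k + l) ∪ {none}) := by
  have h0 : (0 : ℕ) < n := by omega
  constructor
  · intro hkj
    ext x
    simp only [Set.mem_union, Set.mem_image2, Set.mem_singleton_iff, Pkl, Set.mem_setOf_eq]
    constructor
    · rintro (⟨a, ⟨μ, ν, rfl, hμ, hν⟩, b, ⟨κ, lam, rfl, hκ, hlam⟩, rfl⟩ | rfl)
      · simp only [pmul]
        split_ifs with h1 h2
        · left
          exact ⟨_, _, rfl, by simp [hμ, hν, hκ]; omega, hlam⟩
        · exact absurd (h2.eq_of_length (le_antisymm h2.length_le (by omega)) ▸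
            List.prefix_refl ν) h1
        · right; rfl
      · right; rfl
    · rintro (⟨μ, lam, rfl, hμ, hlam⟩ | rfl)
      · left
        refine ⟨some (μ.take i, List.replicate j ⟨0, h0⟩),
          ⟨_, _, rfl, by simp; omega, by simp⟩,
          some (List.replicate j ⟨0, h0⟩ ++ μ.drop i, lam),
          ⟨_, _, rfl, by simp [hμ]; omega, hlam⟩, ?_⟩
        simp [pmul, List.prefix_append, List.drop_left]
      · right; rfl
  · intro hkj
    ext x
    simp only [Set.mem_union, Set.mem_image2, Set.mem_singleton_iff, Pkl, Set.mem_setOf_eq]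
    constructor
    · rintro (⟨a, ⟨μ, ν, rfl, hμ, hν⟩, b, ⟨κ, lam, rfl, hκ, hlam⟩, rfl⟩ | rfl)
      · simp only [pmul]
        split_ifs with h1 h2
        · left
          have hjk : j = k := le_antisymm (hκ ▸ hν ▸ h1.length_le) hkj
          exact ⟨_, _, rfl, by simp [hμ, hν, hκ]; omega, by rw [hlam]; omega⟩
        · left
          exact ⟨_, _, rfl, hμ, by simp [hν, hκ, hlam]; omega⟩
        · right; rfl
      · right; rfl
    · rintro (⟨μ, ζ, rfl, hμ, hζ⟩ | rfl)
      · left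
        refine ⟨some (μ, List.replicate k ⟨0, h0⟩ ++ ζ.drop l),
          ⟨_, _, rfl, hμ, by simp [hζ]; omega⟩,
          some (List.replicate k ⟨0, h0⟩, ζ.take l),
          ⟨_, _, rfl, by simp, by simp [hζ]⟩, ?_⟩
        simp only [pmul]
        split_ifs with h1 h2
        · have hle : ζ.length ≤ l := by
            have := h1.length_le; simp at this; omega
          have hd : ζ.drop l = [] := by simp [List.drop_eq_nil_iff]; omega
          simp [hd, List.take_of_length_le hle]
        · congr 1
          rw [List.length_replicate, List.drop_left', List.take_append_drop]
          simp
        · exact absurd (List.prefix_append _ _) h2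
      · right; rfl
end

section
/- Let n ≥ 2 and let T ⊆ P_n be a wide subsemigroup with M_n ⊆ T. If some (μ,ν) ∈ T, then P_n^{|μ|,|ν|} ⊆ T. -/
/-- if `T` is a wide subsemigroup of `P_n` containing `M_n` and
`s_μ s_ν* ∈ T`, then `P_n^{|μ|,|ν|} ⊆ T`. -/
theorem mem_imp_Pkl_subset (n : ℕ) (hn : 2 ≤ n) (T : Set (Option (W n × W n)))
    (hT : IsWideSub n T) (hM : Mn n ⊆ T) (μ ν : W n)
    (h : some (μ, ν) ∈ T) :
    Pkl n μ.length ν.length ⊆ T := by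
  rintro x ⟨α, β, rfl, hα, hβ⟩
  have h1 : some (α, μ) ∈ T := hM (Or.inr ⟨α, μ, rfl, hα⟩)
  have h2 : some (ν, β) ∈ T := hM (Or.inr ⟨ν, β, rfl, hβ.symm⟩)
  have e1 : pmul (some (α, μ)) (some (μ, ν)) = some (α, ν) := by
    simp [pmul]
  have e2 : pmul (some (α, ν)) (some (ν, β)) = some (α, β) := by
    simp [pmul]
  have := hT.1 _ _ (hT.1 _ _ h1 h) h2
  rwa [e1, e2] at this
end

section
/- Let n ≥ 2, let T ⊆ P_n be a wide subsemigroup with M_n ⊆ T, and let k, l ∈ ℕ. If P_n^{k,l} ⊆ T, then P_n^{l,k} ⊆ T and P_n^{k+1,l+1} ⊆ T. -/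
/-- if `T` is a wide subsemigroup of `P_n` containing `M_n` and
`P_n^{k,l} ⊆ T`, then `P_n^{l,k} ⊆ T` and `P_n^{k+1,l+1} ⊆ T`. -/
theorem Pkl_subset_symm_and_succ (n : ℕ) (hn : 2 ≤ n)
    (T : Set (Option (W n × W n))) (hT : IsWideSub n T) (hM : Mn n ⊆ T)
    (k l : ℕ) (h : Pkl n k l ⊆ T) :
    Pkl n l k ⊆ T ∧ Pkl n (k + 1) (l + 1) ⊆ T := by
  obtain ⟨hmul, hstar, h0, hid⟩ := hT
  constructor
  · rintro x ⟨μ, ν, rfl, hμ, hν⟩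
    have : some (ν, μ) ∈ T := h ⟨ν, μ, rfl, hν, hμ⟩
    simpa [pstar] using hstar _ this
  · rintro x ⟨μ, ν, rfl, hμ, hν⟩
    rcases List.eq_nil_or_concat μ with rfl | ⟨μ₁, c, rfl⟩
    · simp at hμ
    have hμ₁ : μ₁.length = k := by
      simpa [List.concat_eq_append] using hμ
    set ν₁ : W n := List.replicate l ⟨0, by omega⟩ with hν₁
    have hx : some (μ₁, ν₁) ∈ T := h ⟨μ₁, ν₁, rfl, hμ₁, by simp [hν₁]⟩
    have hy : some (ν₁ ++ [c], ν) ∈ T := hM (Or.inr ⟨ν₁ ++ [c], ν, rfl, by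
      simp [hν₁, hν]⟩)
    have := hmul _ _ hx hy
    have hpre : ν₁ <+: ν₁ ++ [c] := List.prefix_append _ _
    simpa [pmul, hpre, List.concat_eq_append] using this
end

section
/- Let n ≥ 2, let T ⊆ P_n be a β-join closed wide subsemigroup with M_n ⊆ T, and let k, l ≥ 1 be natural numbers. If P_n^{k,l} ⊆ T, then P_n^{k-1,l-1} ⊆ T. -/
/-- The cylinder set `C(μ) ⊆ {1,…,n}^ℕ` of sequences beginning with `μ`. -/
def Cyl {n : ℕ} (μ : W n) : Set (ℕ → Fin n) :=
  {x | ∀ (i : ℕ) (h : i < μ.length), x i = μ[i]}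

/-- A subsemigroup `T ⊆ P_n` is `β`-join closed if for every `s = s_μ s_ν*`:
`s ∈ T` iff there is a finite set `F` of words such that `s · s_κ s_κ* ∈ T` for
all `κ ∈ F` and `C(ν) ⊆ ⋃_{κ ∈ F} C(κ)`. -/
def IsJoinClosed (n : ℕ) (T : Set (Option (W n × W n))) : Prop :=
  ∀ μ ν : W n, some (μ, ν) ∈ T ↔
    ∃ F : Finset (W n), (∀ κ ∈ F, pmul (some (μ, ν)) (some (κ, κ)) ∈ T) ∧
      Cyl ν ⊆ ⋃ κ ∈ F, Cyl κ

/-- if `T` is a `β`-join closed wide subsemigroup of `P_n` containing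
`M_n`, `k, l ≥ 1` and `P_n^{k,l} ⊆ T`, then `P_n^{k-1,l-1} ⊆ T`. -/
theorem Pkl_subset_pred (n : ℕ) (hn : 2 ≤ n) (T : Set (Option (W n × W n)))
    (hT : IsWideSub n T) (hJ : IsJoinClosed n T) (hM : Mn n ⊆ T)
    (k l : ℕ) (hk : 1 ≤ k) (hl : 1 ≤ l) (h : Pkl n k l ⊆ T) :
    Pkl n (k - 1) (l - 1) ⊆ T := by
  rintro x ⟨μ, ν, rfl, hμ, hν⟩
  rw [hJ μ ν]
  refine ⟨Finset.image (fun a : Fin n => ν ++ [a]) Finset.univ, ?_, ?_⟩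
  · intro κ hκ
    simp only [Finset.mem_image, Finset.mem_univ, true_and] at hκ
    obtain ⟨a, rfl⟩ := hκ
    have hpre : ν <+: ν ++ [a] := ⟨[a], rfl⟩
    have : pmul (some (μ, ν)) (some (ν ++ [a], ν ++ [a]))
        = some (μ ++ [a], ν ++ [a]) := by
      simp [pmul, hpre, List.drop_append]
    rw [this]
    apply h
    refine ⟨μ ++ [a], ν ++ [a], rfl, ?_, ?_⟩ <;> simp [hμ, hν, Nat.sub_add_cancel, hk, hl]
  · intro x hx
    have hn1 : 0 < n := by omega
    simp only [Set.mem_iUnion, Finset.mem_image, Finset.mem_univ, true_and]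
    refine ⟨ν ++ [x ν.length], ⟨x ν.length, rfl⟩, ?_⟩
    intro i hi
    simp only [List.length_append, List.length_cons, List.length_nil] at hi
    rcases Nat.lt_or_ge i ν.length with h' | h'
    · rw [List.getElem_append_left h']
      exact hx i h'
    · have : i = ν.length := by omega
      subst this
      simp
end

section
/- Let n ≥ 2 and let T ⊊ P_n be a proper β-join closed subsemigroup of P_n with M_n ⊆ T. Then there exists m ∈ ℕ such that T = P_n^m. -/
/-- `P_n^m = { s_μ s_ν* | |μ| ≡ |ν| (mod m) } ∪ {0}`. -/
def Pm (n m : ℕ) : Set (Option (W n × W n)) :=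
  {x | x = none ∨ ∃ μ ν : W n, x = some (μ, ν) ∧ μ.length ≡ ν.length [MOD m]}
section AuxPoly

variable {n : ℕ} {T : Set (Option (W n × W n))}

lemma pmul_mid (μ ν κ : W n) :
    pmul (some (μ, ν)) (some (ν, κ)) = some (μ, κ) := by
  simp [pmul]

lemma pmul_snoc (μ ν : W n) (a : Fin n) :
    pmul (some (μ, ν)) (some (ν ++ [a], ν ++ [a])) = some (μ ++ [a], ν ++ [a]) := by
  have h : ν <+: ν ++ [a] := ⟨[a], rfl⟩
  simp [pmul, h, List.drop_left]

/-- Membership in `T` only depends on the lengths. -/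
lemma mem_of_len (hmul : ∀ a b, a ∈ T → b ∈ T → pmul a b ∈ T)
    (hM : Mn n ⊆ T) {μ ν μ' ν' : W n} (h1 : μ'.length = μ.length)
    (h2 : ν'.length = ν.length) (h : some (μ, ν) ∈ T) : some (μ', ν') ∈ T := by
  have a1 : some (μ', μ) ∈ T := hM (Or.inr ⟨μ', μ, rfl, h1⟩)
  have a2 : some (ν, ν') ∈ T := hM (Or.inr ⟨ν, ν', rfl, h2.symm⟩)
  have := hmul _ _ (hmul _ _ a1 h) a2
  rwa [pmul_mid, pmul_mid] at this

/-- Shifting down using β-join closedness. -/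
lemma mem_of_snoc (hJ : IsJoinClosed n T) {μ ν : W n}
    (h : ∀ a : Fin n, some (μ ++ [a], ν ++ [a]) ∈ T) : some (μ, ν) ∈ T := by
  rw [hJ]
  refine ⟨Finset.univ.image (fun a : Fin n => ν ++ [a]), ?_, ?_⟩
  · intro κ hκ
    simp only [Finset.mem_image, Finset.mem_univ, true_and] at hκ
    obtain ⟨a, rfl⟩ := hκ
    rw [pmul_snoc]; exact h a
  · intro x hx
    simp only [Set.mem_iUnion, Finset.mem_image, Finset.mem_univ, true_and,
      exists_prop, exists_exists_eq_and]
    refine ⟨x ν.length, ?_⟩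
    intro i hi
    have hi' : i < ν.length + 1 := by simpa using hi
    rcases lt_or_eq_of_le (Nat.lt_succ_iff.mp hi') with h' | h'
    · rw [List.getElem_append_left h']
      exact hx i h'
    · rw [List.getElem_concat_length h']
      rw [h']

end AuxPoly

/-- every proper `β`-join closed subsemigroup of `P_n` containing
`M_n` equals `P_n^m` for some `m ∈ ℕ`. -/
theorem joinClosed_sub_eq_Pm (n : ℕ) (hn : 2 ≤ n) (T : Set (Option (W n × W n)))
    (hmul : ∀ a b, a ∈ T → b ∈ T → pmul a b ∈ T)
    (hstar : ∀ a ∈ T, pstar a ∈ T)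
    (hM : Mn n ⊆ T) (hJ : IsJoinClosed n T)
    (hproper : T ≠ Set.univ) :
    ∃ m : ℕ, T = Pm n m := by
  classical
  set z : Fin n := ⟨0, by omega⟩ with hz
  set rep : ℕ → W n := fun k => List.replicate k z with hrep
  have hreplen : ∀ k, (rep k).length = k := fun k => List.length_replicate
  -- Q k l : the canonical element of lengths (k, l) is in T
  set Q : ℕ → ℕ → Prop := fun k l => some (rep k, rep l) ∈ T with hQ
  have hmemQ : ∀ {μ ν : W n}, some (μ, ν) ∈ T → Q μ.length ν.length := by
    intro μ ν h
    exact mem_of_len hmul hM (hreplen _) (hreplen _) h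
  have hQmem : ∀ {μ ν : W n}, Q μ.length ν.length → some (μ, ν) ∈ T := by
    intro μ ν h
    exact mem_of_len hmul hM (hreplen _).symm ((hreplen _).symm) h
  -- shifting up
  have hup : ∀ k l, Q k l → Q (k + 1) (l + 1) := by
    intro k l h
    have := hmul _ _ h (hM (Or.inr ⟨rep l ++ [z], rep l ++ [z], rfl, rfl⟩))
    rw [pmul_snoc] at this
    exact mem_of_len hmul hM (by simp [hreplen]) (by simp [hreplen]) this
  -- shifting down
  have hdown : ∀ k l, Q (k + 1) (l + 1) → Q k l := by
    intro k l h
    apply mem_of_snoc hJ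
    intro a
    exact mem_of_len hmul hM (by simp [hreplen]) (by simp [hreplen]) h
  have hshift : ∀ t k l, Q k l ↔ Q (k + t) (l + t) := by
    intro t
    induction t with
    | zero => simp
    | succ t ih =>
      intro k l
      rw [ih k l]
      constructor
      · intro h; exact hup _ _ h
      · intro h; exact hdown _ _ h
  -- transfer along equal differences
  have hkey : ∀ k l k' l' : ℕ, k + l' = k' + l → Q k l → Q k' l' := by
    intro k l k' l' hd h
    have h1 : Q (k + l') (l + l') := (hshift l' k l).mp h
    have h2 : Q (k' + l) (l' + l) := by
      rw [hd] at h1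
      rwa [Nat.add_comm l l'] at h1
    exact (hshift l k' l').mpr h2
  -- the set of length differences is a subgroup of ℤ
  have hQ00 : Q 0 0 := hM (Or.inr ⟨rep 0, rep 0, rfl, rfl⟩)
  have hQadd : ∀ k₁ l₁ k₂ l₂, Q k₁ l₁ → Q k₂ l₂ → Q (k₁ + k₂) (l₁ + l₂) := by
    intro k₁ l₁ k₂ l₂ h1 h2
    have h2' : Q (k₂ + l₁) (l₂ + l₁) := (hshift l₁ k₂ l₂).mp h2
    have hpre : rep l₁ <+: rep (k₂ + l₁) := by
      refine ⟨rep k₂, ?_⟩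
      rw [hrep]
      simp only []
      rw [← List.replicate_add, Nat.add_comm]
    have := hmul _ _ h1 h2'
    rw [show pmul (some (rep k₁, rep l₁)) (some (rep (k₂ + l₁), rep (l₂ + l₁)))
        = some (rep k₁ ++ (rep (k₂ + l₁)).drop (rep l₁).length, rep (l₂ + l₁)) from by
      simp [pmul, hpre]] at this
    have hlen : (rep k₁ ++ (rep (k₂ + l₁)).drop (rep l₁).length).length = k₁ + k₂ := by
      simp [hreplen, hrep]
    have h3 : some (rep (k₁ + k₂), rep (l₂ + l₁)) ∈ T :=
      mem_of_len hmul hM (by rw [hreplen, hlen]) rfl this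
    exact hkey (k₁ + k₂) (l₂ + l₁) (k₁ + k₂) (l₁ + l₂) (by omega) h3
  have hQneg : ∀ k l, Q k l → Q l k := by
    intro k l h
    have := hstar _ h
    rwa [show pstar (some (rep k, rep l)) = some (rep l, rep k) from rfl] at this
  set D : AddSubgroup ℤ :=
    { carrier := {d | ∃ k l : ℕ, (k : ℤ) - l = d ∧ Q k l}
      zero_mem' := ⟨0, 0, by simp, hQ00⟩
      add_mem' := by
        rintro a b ⟨k₁, l₁, hd₁, h1⟩ ⟨k₂, l₂, hd₂, h2⟩
        exact ⟨k₁ + k₂, l₁ + l₂, by push_cast; omega, hQadd _ _ _ _ h1 h2⟩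
      neg_mem' := by
        rintro a ⟨k, l, hd, h⟩
        exact ⟨l, k, by omega, hQneg _ _ h⟩ } with hD
  obtain ⟨g, hg⟩ := Int.subgroup_cyclic D
  refine ⟨g.natAbs, ?_⟩
  have hDdvd : ∀ d : ℤ, d ∈ D ↔ (g.natAbs : ℤ) ∣ d := by
    intro d
    rw [hg, AddSubgroup.mem_closure_singleton, Int.natAbs_dvd]
    constructor
    · rintro ⟨c, rfl⟩; exact ⟨c, by rw [smul_eq_mul]; ring⟩
    · rintro ⟨c, rfl⟩; exact ⟨c, by rw [smul_eq_mul]; ring⟩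
  ext x
  match x with
  | none =>
      constructor
      · intro _; exact Or.inl rfl
      · intro _; exact hM (Or.inl rfl)
  | some (μ, ν) =>
      constructor
      · intro h
        refine Or.inr ⟨μ, ν, rfl, ?_⟩
        have hd : ((μ.length : ℤ) - ν.length) ∈ D :=
          ⟨μ.length, ν.length, rfl, hmemQ h⟩
        rw [hDdvd] at hd
        rw [Nat.modEq_iff_dvd]
        have := dvd_neg.mpr hd
        rwa [neg_sub] at this
      · rintro (h | ⟨μ', ν', he, h⟩)
        · exact absurd h (by simp)
        · obtain ⟨rfl, rfl⟩ : μ = μ' ∧ ν = ν' := by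
            simpa [Prod.ext_iff] using he
          rw [Nat.modEq_iff_dvd] at h
          have : ((μ.length : ℤ) - ν.length) ∈ D := by
            rw [hDdvd]
            rw [show (μ.length : ℤ) - ν.length = -((ν.length : ℤ) - μ.length) by ring]
            exact dvd_neg.mpr h
          obtain ⟨k, l, hd, hQkl⟩ := this
          exact hQmem (hkey k l μ.length ν.length (by omega) hQkl)
end

section
/- Let n ≥ 2. For every m ∈ ℕ, the set P_n^m is a β-join closed wide subsemigroup of P_n containing M_n. -/

lemma cyl_prefix {n : ℕ} (x : ℕ → Fin n) (ν κ : W n)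
    (hx : x ∈ Cyl ν) (hx' : x ∈ Cyl κ) (hle : κ.length ≤ ν.length) : κ <+: ν := by
  rw [List.prefix_iff_eq_take]
  apply List.ext_getElem
  · simp [Nat.min_eq_left hle]
  · intro i h1 h2
    have hi : i < κ.length := h1
    have hi' : i < ν.length := lt_of_lt_of_le hi hle
    have e1 := hx i hi'
    have e2 := hx' i hi
    simp only [List.getElem_take]
    rw [← e1, ← e2]

/-- for every `m ∈ ℕ`, `P_n^m` is a `β`-join closed wide subsemigroup
of `P_n` containing `M_n`. -/
theorem Pm_joinClosed_wide (n : ℕ) (hn : 2 ≤ n) (m : ℕ) :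
    IsWideSub n (Pm n m) ∧ Mn n ⊆ Pm n m ∧ IsJoinClosed n (Pm n m) := by
  have hmul : ∀ a b, a ∈ Pm n m → b ∈ Pm n m → pmul a b ∈ Pm n m := by
    rintro a b (rfl | ⟨μ, ν, rfl, h1⟩) hb
    · left; rfl
    rcases hb with (rfl | ⟨κ, lam, rfl, h2⟩)
    · left; rfl
    simp only [pmul]
    split_ifs with hp hq
    · right
      obtain ⟨t, rfl⟩ := hp
      refine ⟨_, _, rfl, ?_⟩
      simp only [List.length_append, List.drop_append_of_le_length le_rfl,
        List.drop_length, List.nil_append, List.length_drop] at *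
      have : μ.length + t.length ≡ ν.length + t.length [MOD m] := h1.add_right _
      exact this.trans h2
    · right
      obtain ⟨t, rfl⟩ := hq
      refine ⟨_, _, rfl, ?_⟩
      simp only [List.length_append] at *
      have h3 : κ.length + t.length ≡ lam.length + t.length [MOD m] := h2.add_right _
      simpa [List.drop_append_of_le_length le_rfl] using h1.trans h3
    · left; rfl
  refine ⟨⟨hmul, ?_, Or.inl rfl, fun κ => Or.inr ⟨κ, κ, rfl, Nat.ModEq.refl _⟩⟩, ?_, ?_⟩
  · rintro a (rfl | ⟨μ, ν, rfl, h⟩)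
    · left; rfl
    · exact Or.inr ⟨ν, μ, rfl, h.symm⟩
  · rintro a (rfl | ⟨μ, ν, rfl, h⟩)
    · left; rfl
    · exact Or.inr ⟨μ, ν, rfl, h ▸ Nat.ModEq.refl _⟩
  · intro μ ν
    constructor
    · intro h
      refine ⟨{ν}, ?_, ?_⟩
      · intro κ hκ
        simp only [Finset.mem_singleton] at hκ
        subst hκ
        simpa [pmul] using h
      · intro x hx
        simp only [Set.mem_iUnion, Finset.mem_singleton]
        exact ⟨ν, rfl, hx⟩
    · rintro ⟨F, hF, hcov⟩
      set x : ℕ → Fin n := fun i => if h : i < ν.length then ν[i] else ⟨0, by omega⟩ with hxdef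
      have hxν : x ∈ Cyl ν := fun i h => by simp [hxdef, h]
      obtain ⟨κ, hκF, hxκ⟩ : ∃ κ ∈ F, x ∈ Cyl κ := by
        have := hcov hxν
        simpa using this
      have hmem := hF κ hκF
      rcases le_or_gt κ.length ν.length with hle | hlt
      · have hpre : κ <+: ν := cyl_prefix x ν κ hxν hxκ hle
        by_cases hvk : ν <+: κ
        · have : κ = ν := hpre.eq_of_length (le_antisymm hle hvk.length_le)
          subst this
          simpa [pmul] using hmem
        · simp only [pmul, if_neg hvk, if_pos hpre] at hmem
          obtain ⟨t, rfl⟩ := hpre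
          simp only [List.drop_append_of_le_length le_rfl, List.drop_length,
            List.nil_append] at hmem
          simpa using hmem
      · have hpre : ν <+: κ := cyl_prefix x κ ν hxκ hxν hlt.le
        simp only [pmul, if_pos hpre] at hmem
        rcases hmem with h | ⟨μ', ν', heq, hmod⟩
        · exact absurd h (by simp)
        · right
          refine ⟨μ, ν, rfl, ?_⟩
          obtain ⟨t, rfl⟩ := hpre
          injection heq with heq'
          injection heq' with e1 e2
          subst e1; subst e2
          simp only [List.drop_append_of_le_length le_rfl, List.drop_length,
            List.nil_append, List.length_append] at hmod
          exact Nat.ModEq.add_right_cancel' t.length hmod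
end

section
/- Let X be a locally compact Hausdorff space, E a meet-semilattice with least element ⊥, and D : E → Set X a strongly tight family of domains such that D e ≠ ∅ for every e ≠ ⊥. For x ∈ X define ξ_x : E → Bool by ξ_x e = true iff x ∈ D e. Then each ξ_x is an ultracharacter of E, and the map x ↦ ξ_x is a homeomorphism from X onto the ultracharacter space Ê_∞ (equipped with the subspace topology of the product topology on E → Bool). -/
/-- A character of a meet-semilattice `E` with least element `⊥`: a map
`ξ : E → Bool` with `ξ (e ⊓ f) = ξ e && ξ f`, `ξ ⊥ = false`, and `ξ e = true`
for at least one `e`. -/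
def IsChar {E : Type*} [SemilatticeInf E] [OrderBot E] (ξ : E → Bool) : Prop :=
  (∀ e f : E, ξ (e ⊓ f) = (ξ e && ξ f)) ∧ ξ ⊥ = false ∧ ∃ e : E, ξ e = true

/-- An ultracharacter: a character maximal in the pointwise order. -/
def IsUltra {E : Type*} [SemilatticeInf E] [OrderBot E] (ξ : E → Bool) : Prop :=
  IsChar ξ ∧ ∀ η : E → Bool, IsChar η → (∀ e, ξ e = true → η e = true) → η = ξ

/-- A strongly tight family of domains on `X` indexed by the meet-semilattice `E`:
`D ⊥ = ∅`, `D (e ⊓ f) = D e ∩ D f`, each `D e` is compact open, and the `D e`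
form a basis for the topology of `X`. -/
structure StronglyTightFamily (E X : Type*) [SemilatticeInf E] [OrderBot E]
    [TopologicalSpace X] (D : E → Set X) : Prop where
  bot_eq : D ⊥ = ∅
  inf_eq : ∀ e f : E, D (e ⊓ f) = D e ∩ D f
  isCompact : ∀ e : E, IsCompact (D e)
  isOpen : ∀ e : E, IsOpen (D e)
  isBasis : TopologicalSpace.IsTopologicalBasis (Set.range D)

attribute [local instance] Classical.propDecidable

section Aux

attribute [local instance] Classical.propDecidable

set_option linter.unusedSectionVars false
variable {E X : Type*} [SemilatticeInf E] [OrderBot E] [TopologicalSpace X] [T2Space X]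

lemma StronglyTightFamily.point_char {D : E → Set X} (hD : StronglyTightFamily E X D) (x : X) :
    IsChar (fun e => decide (x ∈ D e)) := by
  refine ⟨fun e f => ?_, by simp [hD.bot_eq], ?_⟩
  · by_cases h : x ∈ D e <;> by_cases h2 : x ∈ D f <;>
      simp [hD.inf_eq, h, h2]
  · obtain ⟨v, ⟨e, rfl⟩, hx, -⟩ :=
      hD.isBasis.exists_subset_of_mem_open (Set.mem_univ x) isOpen_univ
    exact ⟨e, by simp [hx]⟩

lemma StronglyTightFamily.char_point {D : E → Set X} (hD : StronglyTightFamily E X D)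
    (hne : ∀ e : E, e ≠ ⊥ → (D e).Nonempty) {η : E → Bool} (hη : IsChar η) :
    ∃ x : X, ∀ e, η e = true → x ∈ D e := by
  obtain ⟨hmul, hbot, e0, he0⟩ := hη
  haveI : Nonempty {e : E // η e = true} := ⟨⟨e0, he0⟩⟩
  have hne' : ∀ i : {e : E // η e = true}, (D i.1).Nonempty := by
    rintro ⟨e, he⟩
    apply hne
    rintro rfl
    rw [hbot] at he
    exact absurd he (by simp)
  have hdir : Directed (· ⊇ ·) (fun i : {e : E // η e = true} => D i.1) := by
    rintro ⟨e, he⟩ ⟨f, hf⟩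
    refine ⟨⟨e ⊓ f, by rw [hmul, he, hf]; rfl⟩, ?_, ?_⟩ <;>
      · simp only [hD.inf_eq]
        first
        | exact Set.inter_subset_left
        | exact Set.inter_subset_right
  obtain ⟨x, hx⟩ := IsCompact.nonempty_iInter_of_directed_nonempty_isCompact_isClosed
    _ hdir hne' (fun i => hD.isCompact i.1) (fun i => (hD.isCompact i.1).isClosed)
  exact ⟨x, fun e he => by simpa using Set.mem_iInter.1 hx ⟨e, he⟩⟩

lemma StronglyTightFamily.point_ultra {D : E → Set X} (hD : StronglyTightFamily E X D)
    (hne : ∀ e : E, e ≠ ⊥ → (D e).Nonempty) (x : X) :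
    IsUltra (fun e => decide (x ∈ D e)) := by
  refine ⟨hD.point_char x, fun η hη hle => ?_⟩
  obtain ⟨y, hy⟩ := hD.char_point hne hη
  have hxy : x = y := by
    by_contra hxy
    have : x ∈ ({y}ᶜ : Set X) := hxy
    obtain ⟨v, ⟨e, rfl⟩, hxv, hsub⟩ :=
      hD.isBasis.exists_subset_of_mem_open this (isOpen_compl_singleton)
    have : η e = true := hle e (by simp [hxv])
    exact hsub (hy e this) rfl
  subst hxy
  funext e
  have h1 : η e = true → decide (x ∈ D e) = true := fun h => by simp [hy e h]
  have h2 := hle e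
  cases hηe : η e <;> cases hde : decide (x ∈ D e)
  · rfl
  · exact absurd (hle e hde) (by simp [hηe])
  · exact absurd (h1 hηe) (by simp [hde])
  · rfl
end Aux


/-- for a strongly tight family of domains with nonempty domains on
nonzero elements on a locally compact Hausdorff space `X`, the maps
`ξ_x : e ↦ (x ∈ D e)` are ultracharacters, and `x ↦ ξ_x` is a homeomorphism from
`X` onto the ultracharacter space `Ê_∞`. -/
theorem stronglyTight_homeo_ultraChars {E X : Type*} [SemilatticeInf E]
    [OrderBot E] [TopologicalSpace X] [LocallyCompactSpace X] [T2Space X]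
    (D : E → Set X) (hD : StronglyTightFamily E X D)
    (hne : ∀ e : E, e ≠ ⊥ → (D e).Nonempty) :
    ∃ hult : ∀ x : X, IsUltra (fun e => decide (x ∈ D e)),
      IsHomeomorph (fun x : X =>
        (⟨fun e => decide (x ∈ D e), hult x⟩ : {ξ : E → Bool // IsUltra ξ})) := by
  refine ⟨fun x => hD.point_ultra hne x, ?_⟩
  set f : X → {ξ : E → Bool // IsUltra ξ} :=
    fun x => ⟨fun e => decide (x ∈ D e), hD.point_ultra hne x⟩ with hf
  have hsurj : Function.Surjective f := by
    rintro ⟨ξ, hξ⟩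
    obtain ⟨x, hx⟩ := hD.char_point hne hξ.1
    have := hξ.2 (fun e => decide (x ∈ D e)) (hD.point_char x)
      (fun e he => by simp [hx e he])
    exact ⟨x, Subtype.ext this⟩
  have hinj : Function.Injective f := by
    intro x y hxy
    by_contra hne'
    have hx : x ∈ ({y}ᶜ : Set X) := hne'
    obtain ⟨v, ⟨e, rfl⟩, hxv, hsub⟩ :=
      hD.isBasis.exists_subset_of_mem_open hx (isOpen_compl_singleton)
    have h1 : decide (x ∈ D e) = true := by simp [hxv]
    have h2 : decide (y ∈ D e) = true := by
      have := congrArg (fun g => g.1 e) hxy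
      simpa [hf] using this.symm.trans h1
    exact hsub (by simpa using h2) rfl
  have hcont : Continuous f := by
    refine Continuous.subtype_mk (continuous_pi fun e => ?_) _
    have heq : (fun x : X => decide (x ∈ D e)) = (D e).boolIndicator := by
      funext x
      by_cases h : x ∈ D e <;> simp [h, Set.boolIndicator]
    rw [heq, continuous_boolIndicator_iff_isClopen]
    exact ⟨(hD.isCompact e).isClosed, hD.isOpen e⟩
  have hopen : IsOpenMap f := by
    intro U hU
    rw [isOpen_iff_forall_mem_open]
    rintro ξ ⟨x, hxU, rfl⟩
    obtain ⟨v, ⟨e, rfl⟩, hxv, hsub⟩ := hD.isBasis.exists_subset_of_mem_open hxU hU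
    refine ⟨(fun ξ : {ξ : E → Bool // IsUltra ξ} => ξ.1 e) ⁻¹' {true}, ?_, ?_, ?_⟩
    · rintro ξ' hξ'
      obtain ⟨y, rfl⟩ := hsurj ξ'
      have : y ∈ D e := by simpa [hf] using hξ'
      exact ⟨y, hsub this, rfl⟩
    · exact IsOpen.preimage ((continuous_apply e).comp continuous_subtype_val)
        (isOpen_discrete _)
    · simp [hf, hxv]
  exact ⟨hcont, hopen, hinj, hsurj⟩
end

section
/- Let X be a locally compact Hausdorff space, E a meet-semilattice with least element ⊥, and D : E → Set X a strongly tight family of domains with D e ≠ ∅ for every e ≠ ⊥. Let 𝒥 ⊆ E be an ideal and C ⊆ 𝒥 a finite subset. Then C is a cover of 𝒥 if and only if ⋃_{c∈C} D c = ⋃_{e∈𝒥} D e. -/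
/-- for a strongly tight family of domains with nonempty domains on
nonzero elements, an ideal `𝒥 ⊆ E` and a finite subset `C ⊆ 𝒥`: `C` is a cover of
`𝒥` iff `⋃_{c ∈ C} D c = ⋃_{e ∈ 𝒥} D e`. -/
theorem cover_iff_union_eq {E X : Type*} [SemilatticeInf E] [OrderBot E]
    [TopologicalSpace X] [LocallyCompactSpace X] [T2Space X]
    (D : E → Set X) (hD : StronglyTightFamily E X D)
    (hne : ∀ e : E, e ≠ ⊥ → (D e).Nonempty)
    (J : Set E) (hJ : ∀ e ∈ J, ∀ f : E, f ≤ e → f ∈ J)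
    (C : Finset E) (hC : ↑C ⊆ J) :
    (∀ e ∈ J, e ≠ ⊥ → ∃ c ∈ C, e ⊓ c ≠ ⊥) ↔
      (⋃ c ∈ C, D c) = ⋃ e ∈ J, D e := by
  have hne' : ∀ e : E, (D e).Nonempty ↔ e ≠ ⊥ := by
    intro e
    constructor
    · rintro ⟨x, hx⟩ rfl
      rw [hD.bot_eq] at hx
      exact hx
    · exact hne e
  constructor
  · intro hcov
    apply Set.Subset.antisymm
    · exact Set.biUnion_subset_biUnion_left hC
    · rintro x hx
      by_contra hxC
      -- the complement of the finite union of compact sets is open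
      have hclosed : IsClosed (⋃ c ∈ C, D c) :=
        Set.Finite.isClosed_biUnion C.finite_toSet (fun c _ => (hD.isCompact c).isClosed)
      obtain ⟨e, heJ, hxe⟩ := Set.mem_iUnion₂.mp hx
      have hopen : IsOpen (D e ∩ (⋃ c ∈ C, D c)ᶜ) :=
        (hD.isOpen e).inter hclosed.isOpen_compl
      have hxmem : x ∈ D e ∩ (⋃ c ∈ C, D c)ᶜ := ⟨hxe, hxC⟩
      obtain ⟨v, ⟨f, rfl⟩, hxv, hvsub⟩ :=
        hD.isBasis.exists_subset_of_mem_open hxmem hopen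
      -- consider f ⊓ e ∈ J
      have hDfe : D (f ⊓ e) = D f := by
        rw [hD.inf_eq]
        exact Set.inter_eq_left.mpr (fun y hy => (hvsub hy).1)
      have hfeJ : f ⊓ e ∈ J := hJ e heJ _ inf_le_right
      have hfene : f ⊓ e ≠ ⊥ := (hne' _).mp ⟨x, hDfe ▸ hxv⟩
      obtain ⟨c, hcC, hfc⟩ := hcov _ hfeJ hfene
      obtain ⟨y, hy⟩ := (hne' _).mpr hfc
      rw [hD.inf_eq, hDfe] at hy
      exact (hvsub hy.1).2 (Set.mem_biUnion hcC hy.2)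
  · intro heq e heJ hebot
    obtain ⟨x, hx⟩ := hne e hebot
    have : x ∈ ⋃ c ∈ C, D c := heq ▸ Set.mem_biUnion heJ hx
    obtain ⟨c, hcC, hxc⟩ := Set.mem_iUnion₂.mp this
    refine ⟨c, hcC, (hne' _).mp ⟨x, ?_⟩⟩
    rw [hD.inf_eq]
    exact ⟨hx, hxc⟩
end

section
/- Let X be a locally compact Hausdorff space, E a meet-semilattice with least element ⊥, and D : E → Set X a strongly tight family of domains with D e ≠ ∅ for every e ≠ ⊥. Let e₀ ∈ E and let 𝒥 ⊆ E be an ideal with e ≤ e₀ for all e ∈ 𝒥. Then ⋃_{e∈𝒥} D e is a closed subset of D e₀ (with respect to the relative topology of D e₀) if and only if 𝒥 admits a finite cover. -/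
/-- for a strongly tight family of domains with nonempty domains on
nonzero elements, `e₀ ∈ E` and an ideal `𝒥` all of whose elements are `≤ e₀`:
`⋃_{e ∈ 𝒥} D e` is closed in `D e₀` (relative topology) iff `𝒥` has a finite
cover. -/
theorem closed_iff_finite_cover {E X : Type*} [SemilatticeInf E] [OrderBot E]
    [TopologicalSpace X] [LocallyCompactSpace X] [T2Space X]
    (D : E → Set X) (hD : StronglyTightFamily E X D)
    (hne : ∀ e : E, e ≠ ⊥ → (D e).Nonempty)
    (e₀ : E) (J : Set E) (hJ : ∀ e ∈ J, ∀ f : E, f ≤ e → f ∈ J)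
    (hle : ∀ e ∈ J, e ≤ e₀) :
    IsClosed {x : D e₀ | (x : X) ∈ ⋃ e ∈ J, D e} ↔
      ∃ C : Finset E, ↑C ⊆ J ∧ ∀ e ∈ J, e ≠ ⊥ → ∃ c ∈ C, e ⊓ c ≠ ⊥ := by
  set U : Set X := ⋃ e ∈ J, D e with hU
  have hUsub : U ⊆ D e₀ := by
    intro x hx
    rcases Set.mem_iUnion₂.1 hx with ⟨e, he, hxe⟩
    have : D e = D e ∩ D e₀ := by
      rw [← hD.inf_eq, inf_eq_left.2 (hle e he)]
    exact (this ▸ hxe).2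
  constructor
  · -- closedness ⇒ finite cover
    intro hcl
    -- U is compact
    rcases isClosed_induced_iff.1 hcl with ⟨F, hF, hFeq⟩
    have hUF : U = D e₀ ∩ F := by
      apply Set.eq_of_subset_of_subset
      · intro x hx
        have hx0 : x ∈ D e₀ := hUsub hx
        have : (⟨x, hx0⟩ : D e₀) ∈ {x : D e₀ | (x : X) ∈ U} := hx
        rw [← hFeq] at this
        exact ⟨hx0, this⟩
      · rintro x ⟨hx0, hxF⟩
        have : (⟨x, hx0⟩ : D e₀) ∈ (Subtype.val ⁻¹' F : Set (D e₀)) := hxF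
        rw [hFeq] at this
        exact this
    have hUcpt : IsCompact U := hUF ▸ (hD.isCompact e₀).inter_right hF
    -- finite subcover
    obtain ⟨t, ht⟩ := hUcpt.elim_finite_subcover (fun e : J => D e)
      (fun e => hD.isOpen e)
      (by intro x hx
          rcases Set.mem_iUnion₂.1 hx with ⟨e, he, hxe⟩
          exact Set.mem_iUnion.2 ⟨⟨e, he⟩, hxe⟩)
    classical
    refine ⟨t.image Subtype.val, ?_, ?_⟩
    · intro c hc
      simp only [Finset.coe_image, Set.mem_image] at hc
      rcases hc with ⟨⟨c', hc'⟩, _, rfl⟩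
      exact hc'
    · intro e heJ hebot
      obtain ⟨x, hx⟩ := hne e hebot
      have hxU : x ∈ U := Set.mem_iUnion₂.2 ⟨e, heJ, hx⟩
      rcases Set.mem_iUnion₂.1 (ht hxU) with ⟨c, hct, hxc⟩
      refine ⟨c, Finset.mem_image_of_mem _ hct, ?_⟩
      intro h
      have : x ∈ D (e ⊓ (c : E)) := (hD.inf_eq e c) ▸ ⟨hx, hxc⟩
      rw [h, hD.bot_eq] at this
      exact this
  · -- finite cover ⇒ closed
    rintro ⟨C, hCJ, hCcov⟩
    set V : Set X := ⋃ c ∈ C, D c with hV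
    have hVU : V ⊆ U := by
      intro x hx
      rcases Set.mem_iUnion₂.1 hx with ⟨c, hc, hxc⟩
      exact Set.mem_iUnion₂.2 ⟨c, hCJ hc, hxc⟩
    have hVcpt : IsCompact V := by
      apply C.isCompact_biUnion
      intro c _
      exact hD.isCompact c
    have hVcl : IsClosed V := hVcpt.isClosed
    have hUV : U = V := by
      apply Set.eq_of_subset_of_subset _ hVU
      -- U ⊆ closure V = V
      have : U ⊆ closure V := by
        intro x hx
        rcases Set.mem_iUnion₂.1 hx with ⟨e, heJ, hxe⟩
        rw [mem_closure_iff]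
        intro O hO hxO
        obtain ⟨t, ⟨f, rfl⟩, hxt, hts⟩ := hD.isBasis.exists_subset_of_mem_open
          (show x ∈ O ∩ D e from ⟨hxO, hxe⟩) (hO.inter (hD.isOpen e))
        have hxfe : x ∈ D (f ⊓ e) := (hD.inf_eq f e) ▸ ⟨hxt, (hts hxt).2⟩
        have hfebot : f ⊓ e ≠ ⊥ := by
          intro h; rw [h, hD.bot_eq] at hxfe; exact hxfe
        have hfeJ : f ⊓ e ∈ J := hJ e heJ _ inf_le_right
        obtain ⟨c, hcC, hcne⟩ := hCcov _ hfeJ hfebot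
        obtain ⟨y, hy⟩ := hne _ hcne
        have hy' : y ∈ D (f ⊓ e) ∩ D c := (hD.inf_eq (f ⊓ e) c) ▸ hy
        have hyf : y ∈ D f ∩ D e := (hD.inf_eq f e) ▸ hy'.1
        refine ⟨y, hts hyf.1 |>.1, Set.mem_iUnion₂.2 ⟨c, hcC, hy'.2⟩⟩
      rwa [hVcl.closure_eq] at this
    have : IsClosed (Subtype.val ⁻¹' V : Set (D e₀)) := hVcl.preimage continuous_subtype_val
    convert this using 1
    ext x
    simp only [Set.mem_setOf_eq, Set.mem_preimage, hUV]
end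

section
/- Let E be a meet-semilattice with a least element ⊥ and a greatest element ⊤ (a unit). Then Ê_tight = Ê_∞ if and only if the ultracharacter space Ê_∞ is compact. -/
lemma char_isClosed {E : Type*} [SemilatticeInf E] [OrderBot E] [OrderTop E] :
    IsClosed {ξ : E → Bool | IsChar ξ} := by
  have hset : {ξ : E → Bool | IsChar ξ} =
      (⋂ e : E, ⋂ f : E, {ξ : E → Bool | ξ (e ⊓ f) = (ξ e && ξ f)}) ∩
      ({ξ : E → Bool | ξ ⊥ = false} ∩ {ξ : E → Bool | ξ ⊤ = true}) := by
    ext ξ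
    simp only [Set.mem_setOf_eq, Set.mem_inter_iff, Set.mem_iInter, IsChar]
    constructor
    · rintro ⟨h1, h2, e, he⟩
      refine ⟨h1, h2, ?_⟩
      have h := h1 e ⊤
      rw [inf_top_eq, he] at h
      simpa using h.symm
    · rintro ⟨h1, h2, h3⟩
      exact ⟨h1, h2, ⊤, h3⟩
  rw [hset]
  refine IsClosed.inter ?_ (IsClosed.inter ?_ ?_)
  · refine isClosed_iInter fun e => isClosed_iInter fun f => ?_
    refine isClosed_eq (continuous_apply _) ?_
    have : (fun ξ : E → Bool => ξ e && ξ f) =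
        (fun p : Bool × Bool => p.1 && p.2) ∘
          fun ξ : E → Bool => (ξ e, ξ f) := rfl
    rw [this]
    exact continuous_of_discreteTopology.comp
      ((continuous_apply e).prodMk (continuous_apply f))
  · exact isClosed_eq (continuous_apply _) continuous_const
  · exact isClosed_eq (continuous_apply _) continuous_const

/-- for a meet-semilattice with least element `⊥` and greatest
element `⊤`, `Ê_tight = Ê_∞` iff the ultracharacter space `Ê_∞` is compact. -/
theorem tight_eq_ultra_iff_compact {E : Type*} [SemilatticeInf E] [OrderBot E]
    [OrderTop E] :
    ({ξ : E → Bool | IsChar ξ} ∩ closure {ξ : E → Bool | IsUltra ξ} =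
      {ξ : E → Bool | IsUltra ξ}) ↔
      IsCompact {ξ : E → Bool | IsUltra ξ} := by
  constructor
  · intro h
    have hclosed : IsClosed {ξ : E → Bool | IsUltra ξ} := by
      rw [← h]; exact char_isClosed.inter isClosed_closure
    exact hclosed.isCompact
  · intro h
    have hclosed : IsClosed {ξ : E → Bool | IsUltra ξ} := h.isClosed
    rw [hclosed.closure_eq]
    exact Set.inter_eq_right.mpr fun ξ hξ => hξ.1
end

section
/- Let E be a meet-semilattice with least element ⊥ such that the ultracharacter space Ê_∞ is compact. For e ∈ E set D_e^∞ := { ξ ∈ Ê_∞ | ξ e = true }. Then the family D^∞ : E → Set Ê_∞ is a strongly tight family of domains on Ê_∞: D_⊥^∞ = ∅, D_{e ⊓ f}^∞ = D_e^∞ ∩ D_f^∞ for all e, f ∈ E, each D_e^∞ is a compact open subset of Ê_∞, and { D_e^∞ | e ∈ E } is a basis for the topology of Ê_∞. -/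
private lemma char_mono {E : Type*} [SemilatticeInf E] [OrderBot E] {ξ : E → Bool}
    (h : IsChar ξ) {a b : E} (hab : a ≤ b) (ha : ξ a = true) : ξ b = true := by
  have h1 := h.1 a b
  rw [inf_eq_left.mpr hab, ha] at h1
  simpa using h1.symm

private lemma ultra_sep {E : Type*} [SemilatticeInf E] [OrderBot E] {ξ : E → Bool}
    (h : IsUltra ξ) {g : E} (hg : ξ g = false) :
    ∃ e, ξ e = true ∧ e ⊓ g = ⊥ := by
  by_contra hcon
  push_neg at hcon
  classical
  set η : E → Bool := fun x => decide (∃ e, ξ e = true ∧ e ⊓ g ≤ x) with hη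
  have hchar : IsChar η := by
    refine ⟨?_, ?_, ?_⟩
    · intro x y
      simp only [hη]
      rw [← Bool.decide_and]
      apply decide_eq_decide.mpr
      constructor
      · rintro ⟨e, he, hle⟩
        exact ⟨⟨e, he, hle.trans inf_le_left⟩, ⟨e, he, hle.trans inf_le_right⟩⟩
      · rintro ⟨⟨e1, he1, h1⟩, ⟨e2, he2, h2⟩⟩
        refine ⟨e1 ⊓ e2, ?_, le_inf ((inf_le_inf_right g inf_le_left).trans h1)
          ((inf_le_inf_right g inf_le_right).trans h2)⟩
        have := h.1.1 e1 e2
        rw [he1, he2] at this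
        simpa using this
    · simp only [hη, decide_eq_false_iff_not]
      rintro ⟨e, he, hle⟩
      exact hcon e he (le_bot_iff.mp hle)
    · obtain ⟨e, he⟩ := h.1.2.2
      exact ⟨e, by simp only [hη]; exact decide_eq_true ⟨e, he, inf_le_left⟩⟩
  have hge : ∀ x, ξ x = true → η x = true := by
    intro x hx
    simp only [hη]
    exact decide_eq_true ⟨x, hx, inf_le_left⟩
  have heq := h.2 η hchar hge
  obtain ⟨e0, he0⟩ := h.1.2.2
  have : η g = true := by
    simp only [hη]; exact decide_eq_true ⟨e0, he0, inf_le_right⟩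
  rw [heq, hg] at this
  exact Bool.false_ne_true this

private lemma char_inf' {E : Type*} [SemilatticeInf E] [OrderBot E] {ξ : E → Bool}
    (h : IsChar ξ) (S : Finset E) (hS : S.Nonempty)
    (hall : ∀ x ∈ S, ξ x = true) : ξ (S.inf' hS id) = true := by
  induction hS using Finset.Nonempty.cons_induction with
  | singleton a => simpa using hall a (by simp)
  | cons a s ha hs ih =>
    rw [Finset.inf'_cons]
    have h1 := h.1 a (s.inf' hs id)
    rw [hall a (by simp), ih (fun x hx => hall x (Finset.mem_cons_of_mem hx))] at h1
    simp at h1; exact h1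


/-- if the ultracharacter space `Ê_∞` of a meet-semilattice `E` with
least element `⊥` is compact, then `e ↦ D_e^∞ = { ξ ∈ Ê_∞ | ξ e = true }` is a
strongly tight family of domains on `Ê_∞`. -/
theorem ultraChar_domains_stronglyTight {E : Type*} [SemilatticeInf E]
    [OrderBot E] (hc : CompactSpace {ξ : E → Bool // IsUltra ξ}) :
    StronglyTightFamily E {ξ : E → Bool // IsUltra ξ}
      (fun e => {ξ : {ξ : E → Bool // IsUltra ξ} | ξ.1 e = true}) := by
  classical
  haveI := hc
  have hopen : ∀ e : E, IsOpen {ξ : {ξ : E → Bool // IsUltra ξ} | ξ.1 e = true} := by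
    intro e
    have hcont : Continuous fun ξ : {ξ : E → Bool // IsUltra ξ} => ξ.1 e :=
      (continuous_apply e).comp continuous_subtype_val
    exact (isOpen_discrete {true}).preimage hcont
  refine ⟨?_, ?_, ?_, hopen, ?_⟩
  · ext ξ
    simp [ξ.2.1.2.1]
  · intro e f
    ext ξ
    simp [ξ.2.1.1 e f, Bool.and_eq_true]
  · intro e
    have hcont : Continuous fun ξ : {ξ : E → Bool // IsUltra ξ} => ξ.1 e :=
      (continuous_apply e).comp continuous_subtype_val
    have hclosed : IsClosed {ξ : {ξ : E → Bool // IsUltra ξ} | ξ.1 e = true} :=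
      (isClosed_discrete {true}).preimage hcont
    exact hclosed.isCompact
  · apply TopologicalSpace.isTopologicalBasis_of_isOpen_of_nhds
    · rintro _ ⟨e, rfl⟩
      exact hopen e
    · intro ξ U hξU hU
      obtain ⟨V, hVopen, rfl⟩ := isOpen_induced_iff.mp hU
      obtain ⟨I, u, hu, hpi⟩ := isOpen_pi_iff.mp hVopen ξ.1 hξU
      -- choose corrector elements
      have hc' : ∀ g : E, ∃ x, ξ.1 x = true ∧ (ξ.1 g = false → x ⊓ g = ⊥) ∧
          (ξ.1 g = true → x ≤ g) := by
        intro g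
        by_cases hgt : ξ.1 g = true
        · exact ⟨g, hgt, fun hgf => by rw [hgt] at hgf; exact absurd hgf (by simp),
            fun _ => le_refl g⟩
        · have hgf : ξ.1 g = false := by simpa using hgt
          obtain ⟨x, hx, hxg⟩ := ultra_sep ξ.2 hgf
          exact ⟨x, hx, fun _ => hxg,
            fun hgt' => by rw [hgt'] at hgf; exact absurd hgf (by simp)⟩
      choose c hc1 hc2 hc3 using hc'
      obtain ⟨e0, he0⟩ := ξ.2.1.2.2
      set S : Finset E := insert e0 (I.image c) with hS
      have hSne : S.Nonempty := ⟨e0, Finset.mem_insert_self _ _⟩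
      set e : E := S.inf' hSne id with he
      have hξe : ξ.1 e = true := by
        apply char_inf' ξ.2.1 S hSne
        intro x hx
        rcases Finset.mem_insert.mp hx with h | h
        · rw [h]; exact he0
        · obtain ⟨a, _, rfl⟩ := Finset.mem_image.mp h
          exact hc1 a
      refine ⟨_, ⟨e, rfl⟩, hξe, ?_⟩
      intro η hηe
      have hηe' : η.1 e = true := hηe
      have key : ∀ a ∈ I, η.1 a = ξ.1 a := by
        intro a ha
        have hca : η.1 (c a) = true := by
          refine char_mono η.2.1 ?_ hηe'
          exact Finset.inf'_le id (Finset.mem_insert_of_mem (Finset.mem_image_of_mem c ha))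
        cases hb : ξ.1 a with
        | false =>
          have hbot := hc2 a hb
          have h1 := η.2.1.1 (c a) a
          rw [hbot, η.2.1.2.1, hca] at h1
          simpa using h1.symm
        | true => exact char_mono η.2.1 (hc3 a hb) hca
      show η.1 ∈ V
      apply hpi
      intro a ha
      rw [key a ha]
      exact (hu a ha).2
end
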